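/- arXiv:math/0203087 — 2 statements merged into one kernel-verified Lean document; each statement's English description precedes it below -/
import Mathlib

section
/- Let M be a closed oriented 4-manifold that is a d-fold simple branched cover of S⁴ with locally flat branching surface F. Then F has at least d + |σ(M)|/2 − χ(M)/2 connected components, where σ(M) is the signature of M. -/
/-- Let `M` be a closed oriented 4-manifold which is a simple `d`-fold branched
cover of `S⁴` with locally flat branching surface `F` having `k` connected
components, with Euler characteristics `χ i` and normal Euler numbers
(self-intersections) `e i`.  Using `χ(F) = 2d − χ(M)` (Riemann–Hurwitz),
`F·F = −2σ(M)` (Viro), and the Whitney–Massey inequality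
`|S_i·S_i| ≤ 4 − 2χ(S_i)` for each component, the number of components
satisfies `k ≥ d + |σ(M)|/2 − χ(M)/2`. -/
theorem components_lower_bound
    (d k : ℕ) (hd : 1 ≤ d) (χM σM : ℤ)
    (χ e : Fin k → ℤ)
    (hχF : (∑ i, χ i) = 2 * (d : ℤ) - χM)
    (hFF : (∑ i, e i) = -2 * σM)
    (hWhitney : ∀ i, |e i| ≤ 4 - 2 * χ i) :
    (k : ℚ) ≥ (d : ℚ) + |(σM : ℚ)| / 2 - (χM : ℚ) / 2 := by
  have h1 : |∑ i, e i| ≤ ∑ i, |e i| := Finset.abs_sum_le_sum_abs _ _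
  have h2 : ∑ i, |e i| ≤ ∑ i, (4 - 2 * χ i) :=
    Finset.sum_le_sum fun i _ => hWhitney i
  have h3 : ∑ i : Fin k, ((4 : ℤ) - 2 * χ i) = 4 * k - 2 * (2 * d - χM) := by
    rw [Finset.sum_sub_distrib, Finset.sum_const, ← Finset.mul_sum, hχF]
    simp [mul_comm]
  have h4 : |(-2 : ℤ) * σM| = 2 * |σM| := by
    rw [abs_mul]; norm_num
  have key : 2 * |σM| ≤ 4 * (k : ℤ) - 2 * (2 * d - χM) := by
    rw [← h4, ← hFF, ← h3]; exact h1.trans h2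
  have keyQ : 2 * |(σM : ℚ)| ≤ 4 * (k : ℚ) - 2 * (2 * d - χM) := by
    have := (Int.cast_le (R := ℚ)).mpr key
    push_cast at this ⊢
    linarith
  linarith
end

section
/- Attaching a 2-handle that cancels a 1-handle leaves the manifold unchanged: if W' is obtained from W × [0,1] by attaching a 1-handle H and then a 2-handle L whose attaching circle runs geometrically once over H, then W' is homotopy equivalent (indeed PL homeomorphic) to W × [0,1]. -/
open unitInterval

/-- The space obtained from `W` by attaching a 1-cell with endpoints `a, b ∈ W`:
the quotient of `W ⊕ [0,1]` gluing `0 ↦ a` and `1 ↦ b`. -/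
def AttachOneCell (W : Type) [TopologicalSpace W] (a b : W) : Type :=
  Quot (fun x y : W ⊕ unitInterval =>
    (x = Sum.inr 0 ∧ y = Sum.inl a) ∨ (x = Sum.inr 1 ∧ y = Sum.inl b))

instance (W : Type) [TopologicalSpace W] (a b : W) :
    TopologicalSpace (AttachOneCell W a b) :=
  instTopologicalSpaceQuot

/-- The canonical (continuous) inclusion `W → W ∪ (1-cell)`. -/
def inclOneCell (W : Type) [TopologicalSpace W] (a b : W) :
    C(W, AttachOneCell W a b) :=
  ⟨fun w => Quot.mk _ (Sum.inl w), continuous_quot_mk.comp continuous_inl⟩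

/-- The core of the attached 1-cell, as a path in `W ∪ (1-cell)` from `a` to `b`. -/
def oneCellPath (W : Type) [TopologicalSpace W] (a b : W) :
    Path (inclOneCell W a b a) (inclOneCell W a b b) where
  toFun t := Quot.mk _ (Sum.inr t)
  continuous_toFun := continuous_quot_mk.comp continuous_inr
  source' := Quot.sound (Or.inl ⟨rfl, rfl⟩)
  target' := Quot.sound (Or.inr ⟨rfl, rfl⟩)

/-- The space obtained from `X` by attaching a 2-cell along the loop `ℓ` based
at `x`: the quotient of `X ⊕ ([0,1] × [0,1])` gluing the bottom edge of the
square along `ℓ` and the other three edges to the basepoint `x`. -/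
def AttachTwoCell (X : Type) [TopologicalSpace X] (x : X) (ℓ : Path x x) : Type :=
  Quot (fun u v : X ⊕ (unitInterval × unitInterval) =>
    ∃ p : unitInterval × unitInterval, u = Sum.inr p ∧
      ((p.2 = 0 ∧ v = Sum.inl (ℓ p.1)) ∨
        ((p.2 = 1 ∨ p.1 = 0 ∨ p.1 = 1) ∧ v = Sum.inl x)))

instance (X : Type) [TopologicalSpace X] (x : X) (ℓ : Path x x) :
    TopologicalSpace (AttachTwoCell X x ℓ) :=
  instTopologicalSpaceQuot

namespace HandleK

noncomputable def mg (s u : ℝ) : ℝ := max |2*s-1| u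
noncomputable def Gg (s u : ℝ) : ℝ := min (4*s-2+u) (max (4*s-2-u) (2*s-1))
noncomputable def Bg (t s u : ℝ) : ℝ := (1-t) * Gg s u + t * (2 * mg s u)
noncomputable def Kxg (t s u : ℝ) : ℝ := max (-(mg s u)) (min (mg s u) (Bg t s u))
noncomputable def Kyg (t s u : ℝ) : ℝ := min (mg s u) (2 * mg s u - |Bg t s u|)
noncomputable def Ksg (t s u : ℝ) : ℝ := (Kxg t s u + 1)/2

variable {t s u : ℝ}

lemma mg_nonneg (hu : 0 ≤ u) : 0 ≤ mg s u := le_max_of_le_right hu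

lemma mg_le_one (hs0 : 0 ≤ s) (hs1 : s ≤ 1) (hu1 : u ≤ 1) : mg s u ≤ 1 := by
  unfold mg; rw [max_le_iff, abs_le]; constructor <;> [constructor;skip] <;> linarith

lemma Gg_bounds (hs0 : 0 ≤ s) (hs1 : s ≤ 1) (hu0 : 0 ≤ u) (hu1 : u ≤ 1) :
    -(2 * mg s u) ≤ Gg s u ∧ Gg s u ≤ 2 * mg s u := by
  have hx : |2*s-1| ≤ mg s u := le_max_left _ _
  have hy : u ≤ mg s u := le_max_right _ _
  rw [abs_le] at hx
  constructor
  · apply le_min <;> [skip; apply le_max_of_le_right] <;> linarith [hx.1]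
  · exact min_le_of_right_le (max_le (by linarith [hx.2]) (by nlinarith [hx.2, mg_nonneg (s := s) hu0]))

lemma Bg_bounds (ht0 : 0 ≤ t) (ht1 : t ≤ 1) (hs0 : 0 ≤ s) (hs1 : s ≤ 1)
    (hu0 : 0 ≤ u) (hu1 : u ≤ 1) :
    -(2 * mg s u) ≤ Bg t s u ∧ Bg t s u ≤ 2 * mg s u := by
  obtain ⟨h1, h2⟩ := Gg_bounds hs0 hs1 hu0 hu1
  have hm := mg_nonneg (s := s) hu0
  unfold Bg; constructor <;> nlinarith

lemma Kxg_bounds (ht0 : 0 ≤ t) (ht1 : t ≤ 1) (hs0 : 0 ≤ s) (hs1 : s ≤ 1)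
    (hu0 : 0 ≤ u) (hu1 : u ≤ 1) : -1 ≤ Kxg t s u ∧ Kxg t s u ≤ 1 := by
  have hm0 := mg_nonneg (s := s) hu0
  have hm1 := mg_le_one hs0 hs1 hu1
  constructor
  · exact le_max_of_le_left (by linarith)
  · exact max_le (by linarith) (le_trans (min_le_left _ _) hm1)

lemma Kyg_bounds (ht0 : 0 ≤ t) (ht1 : t ≤ 1) (hs0 : 0 ≤ s) (hs1 : s ≤ 1)
    (hu0 : 0 ≤ u) (hu1 : u ≤ 1) : 0 ≤ Kyg t s u ∧ Kyg t s u ≤ 1 := by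
  have hm0 := mg_nonneg (s := s) hu0
  have hm1 := mg_le_one hs0 hs1 hu1
  obtain ⟨h1, h2⟩ := Bg_bounds ht0 ht1 hs0 hs1 hu0 hu1
  have habs : |Bg t s u| ≤ 2 * mg s u := abs_le.mpr ⟨h1, h2⟩
  constructor
  · exact le_min hm0 (by linarith)
  · exact le_trans (min_le_left _ _) hm1

lemma Ksg_bounds (ht0 : 0 ≤ t) (ht1 : t ≤ 1) (hs0 : 0 ≤ s) (hs1 : s ≤ 1)
    (hu0 : 0 ≤ u) (hu1 : u ≤ 1) : 0 ≤ Ksg t s u ∧ Ksg t s u ≤ 1 := by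
  obtain ⟨h1, h2⟩ := Kxg_bounds ht0 ht1 hs0 hs1 hu0 hu1
  constructor <;> [unfold Ksg; unfold Ksg] <;> linarith

lemma Kxg_zero (hs0 : 0 ≤ s) (hs1 : s ≤ 1) (hu0 : 0 ≤ u) (hu1 : u ≤ 1) :
    Kxg 0 s u = 2*s-1 ∧ Kyg 0 s u = u := by
  have hB : Bg 0 s u = Gg s u := by unfold Bg; ring
  rcases le_total u (2*s-1) with h | h
  · have hx : |2*s-1| = 2*s-1 := abs_of_nonneg (by linarith)
    have hm : mg s u = 2*s-1 := by rw [mg, hx, max_eq_left h]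
    have hG : Gg s u = 4*s-2-u := by
      rw [Gg, max_eq_left (by linarith), min_eq_right (by linarith)]
    constructor
    · rw [Kxg, hB, hm, hG, min_eq_left (by linarith), max_eq_right (by linarith)]
    · rw [Kyg, hB, hm, hG, abs_of_nonneg (by linarith), min_eq_right (by linarith)]; ring
  · rcases le_total (1-2*s) u with h2 | h2
    · have hm : mg s u = u := by
        rw [mg, max_eq_right]; rw [abs_le]; constructor <;> linarith
      have hG : Gg s u = 2*s-1 := by
        rw [Gg, max_eq_right (by linarith), min_eq_right (by linarith)]
      constructor
      · rw [Kxg, hB, hm, hG, min_eq_right (by linarith), max_eq_right (by linarith)]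
      · have habs : |2*s-1| ≤ u := abs_le.mpr ⟨by linarith, by linarith⟩
        rw [Kyg, hB, hm, hG, min_eq_left (by linarith [habs])]
    · have hx : |2*s-1| = 1-2*s := by rw [abs_of_nonpos (by linarith)]; ring
      have hm : mg s u = 1-2*s := by rw [mg, hx, max_eq_left (by linarith)]
      have hG : Gg s u = 4*s-2+u := by
        rw [Gg, min_eq_left (le_max_of_le_right (by linarith))]
      constructor
      · rw [Kxg, hB, hm, hG, min_eq_right (by linarith), max_eq_left (by linarith)]; ring
      · rw [Kyg, hB, hm, hG, abs_of_nonpos (by linarith), min_eq_right (by linarith)]; ring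

lemma Kxg_one (hs0 : 0 ≤ s) (hs1 : s ≤ 1) (hu0 : 0 ≤ u) (hu1 : u ≤ 1) :
    Kxg 1 s u = mg s u ∧ Kyg 1 s u = 0 := by
  have hB : Bg 1 s u = 2 * mg s u := by unfold Bg; ring
  have hm := mg_nonneg (s := s) hu0
  constructor
  · rw [Kxg, hB, min_eq_left (by linarith), max_eq_right (by linarith)]
  · rw [Kyg, hB, abs_of_nonneg (by linarith), min_eq_right (by linarith)]; ring

lemma K_fix_br (ht0 : 0 ≤ t) (ht1 : t ≤ 1) (hs : 1/2 ≤ s) (hs1 : s ≤ 1) :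
    Kxg t s 0 = 2*s-1 ∧ Kyg t s 0 = 0 := by
  have hx : |2*s-1| = 2*s-1 := abs_of_nonneg (by linarith)
  have hm : mg s 0 = 2*s-1 := by rw [mg, hx, max_eq_left (by linarith)]
  have hG : Gg s 0 = 2 * mg s 0 := by
    rw [Gg, hm, max_eq_left (by linarith), min_eq_left (by linarith)]; ring
  have hB : Bg t s 0 = 2 * mg s 0 := by rw [Bg, hG]; ring
  constructor
  · rw [Kxg, hB, hm, min_eq_left (by linarith), max_eq_right (by linarith)]
  · rw [Kyg, hB, hm, abs_of_nonneg (by linarith), min_eq_right (by linarith)]; ring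

lemma K_fix_E (ht0 : 0 ≤ t) (ht1 : t ≤ 1) (hs0 : 0 ≤ s) (hs1 : s ≤ 1)
    (hu0 : 0 ≤ u) (hu1 : u ≤ 1) (hE : mg s u = 1) :
    Kyg t s u = 1 ∨ Kxg t s u = -1 ∨ Kxg t s u = 1 := by
  obtain ⟨hb1, hb2⟩ := Bg_bounds ht0 ht1 hs0 hs1 hu0 hu1
  rcases le_total (Bg t s u) (-1) with h | h
  · right; left; rw [Kxg, hE, max_eq_left (min_le_of_right_le h)]
  rcases le_total 1 (Bg t s u) with h2 | h2
  · right; right; rw [Kxg, hE, min_eq_left h2, max_eq_right (by linarith)]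
  · left
    have habs : |Bg t s u| ≤ 1 := abs_le.mpr ⟨h, h2⟩
    rw [Kyg, hE, min_eq_left (by linarith [habs])]

end HandleK

namespace HandleAux

open HandleK

variable (W : Type) [TopologicalSpace W] (a b : W) (η : Path b a)

local notation "Y" => AttachOneCell W a b

noncomputable def x₀ : Y := inclOneCell W a b a

noncomputable def ℓp : Path (x₀ W a b) (x₀ W a b) :=
  (oneCellPath W a b).trans (η.map (inclOneCell W a b).continuous)

local notation "XX" => AttachTwoCell (AttachOneCell W a b) (x₀ W a b) (ℓp W a b η)

/-- quotient map onto the big space -/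
def q2 (z : Y ⊕ (I × I)) : XX := Quot.mk _ z

def φm (p : I × I) : XX := q2 W a b η (Sum.inr p)

noncomputable def Gmap : C(W, XX) :=
  ⟨fun w => q2 W a b η (Sum.inl (Quot.mk _ (Sum.inl w))),
    continuous_quot_mk.comp (continuous_inl.comp (continuous_quot_mk.comp continuous_inl))⟩

/-- the square self-homotopy, bundled -/
noncomputable def Kmap (t : I) (p : I × I) : I × I :=
  (⟨Ksg t p.1 p.2,
      (Ksg_bounds t.2.1 t.2.2 p.1.2.1 p.1.2.2 p.2.2.1 p.2.2.2).1,
      (Ksg_bounds t.2.1 t.2.2 p.1.2.1 p.1.2.2 p.2.2.1 p.2.2.2).2⟩,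
   ⟨Kyg t p.1 p.2,
      (Kyg_bounds t.2.1 t.2.2 p.1.2.1 p.1.2.2 p.2.2.1 p.2.2.2).1,
      (Kyg_bounds t.2.1 t.2.2 p.1.2.1 p.1.2.2 p.2.2.1 p.2.2.2).2⟩)

noncomputable def mgI (p : I × I) : I :=
  ⟨mg p.1 p.2, mg_nonneg p.2.2.1, mg_le_one p.1.2.1 p.1.2.2 p.2.2.2⟩

/-- predicate: p lies on the three glued edges -/
def Eedge (p : I × I) : Prop := p.2 = 1 ∨ p.1 = 0 ∨ p.1 = 1

lemma mg_eq_one {p : I × I} (h : Eedge p) : mg (p.1 : ℝ) (p.2 : ℝ) = 1 := by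
  have h1 : |2*(p.1:ℝ)-1| ≤ 1 := abs_le.mpr ⟨by linarith [p.1.2.1], by linarith [p.1.2.2]⟩
  rcases h with h | h | h
  · rw [mg, max_eq_right (by rw [h]; exact h1), h]; rfl
  · have : (p.1 : ℝ) = 0 := by rw [h]; rfl
    rw [mg, this]; norm_num
    exact p.2.2.2
  · have : (p.1 : ℝ) = 1 := by rw [h]; rfl
    rw [mg, this]; norm_num
    exact p.2.2.2

lemma Kmap_zero (p : I × I) : Kmap 0 p = p := by
  obtain ⟨hx, hy⟩ := Kxg_zero p.1.2.1 p.1.2.2 p.2.2.1 p.2.2.2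
  have : Ksg 0 (p.1:ℝ) (p.2:ℝ) = p.1 := by rw [Ksg, hx]; ring
  exact Prod.ext (Subtype.ext this) (Subtype.ext hy)

lemma Kmap_one (p : I × I) :
    Kmap 1 p = (⟨(mg p.1 p.2 + 1)/2, by
        have h1 := mg_nonneg (s := (p.1:ℝ)) p.2.2.1
        have h2 := mg_le_one p.1.2.1 p.1.2.2 p.2.2.2
        constructor <;> linarith⟩, 0) := by
  obtain ⟨hx, hy⟩ := Kxg_one p.1.2.1 p.1.2.2 p.2.2.1 p.2.2.2
  have : Ksg 1 (p.1:ℝ) (p.2:ℝ) = (mg p.1 p.2 + 1)/2 := by rw [Ksg, hx]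
  exact Prod.ext (Subtype.ext this) (Subtype.ext hy)

lemma Kmap_br (t : I) (s₁ : I) (h : 1/2 ≤ (s₁ : ℝ)) : Kmap t (s₁, 0) = (s₁, 0) := by
  obtain ⟨hx, hy⟩ := K_fix_br (s := (s₁:ℝ)) t.2.1 t.2.2 h s₁.2.2
  refine Prod.ext (Subtype.ext ?_) (Subtype.ext ?_)
  · show Ksg t s₁ ((0:I):ℝ) = s₁
    rw [show ((0:I):ℝ) = 0 from rfl, Ksg, hx]; ring
  · show Kyg t s₁ ((0:I):ℝ) = ((0:I):ℝ)
    rw [show ((0:I):ℝ) = 0 from rfl, hy]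

lemma Kmap_br' (t : I) (p : I × I) (h0 : p.2 = 0) (h : 1/2 ≤ (p.1 : ℝ)) :
    Kmap t p = p := by
  obtain ⟨s₁, u₁⟩ := p
  cases h0
  exact Kmap_br t s₁ h

lemma Kmap_E (t : I) {p : I × I} (h : Eedge p) : Eedge (Kmap t p) := by
  rcases K_fix_E t.2.1 t.2.2 p.1.2.1 p.1.2.2 p.2.2.1 p.2.2.2 (mg_eq_one h) with
    h' | h' | h'
  · exact Or.inl (Subtype.ext h')
  · exact Or.inr (Or.inl (Subtype.ext (show Ksg t p.1 p.2 = ((0:I):ℝ) by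
      rw [Ksg, h']; norm_num)))
  · exact Or.inr (Or.inr (Subtype.ext (show Ksg t p.1 p.2 = ((1:I):ℝ) by
      rw [Ksg, h']; norm_num)))

/-- the basic quotient identities -/
lemma phi_bottom (s₁ : I) : φm W a b η (s₁, 0) = q2 W a b η (Sum.inl (ℓp W a b η s₁)) :=
  Quot.sound ⟨(s₁, 0), rfl, Or.inl ⟨rfl, rfl⟩⟩

lemma phi_E {p : I × I} (h : Eedge p) : φm W a b η p = q2 W a b η (Sum.inl (x₀ W a b)) :=
  Quot.sound ⟨p, rfl, Or.inr ⟨h, rfl⟩⟩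

lemma ell_le_half (s₁ : I) (h : (s₁ : ℝ) ≤ 1/2) :
    ℓp W a b η s₁ = Quot.mk _ (Sum.inr ⟨2*(s₁:ℝ),
      (mul_pos_mem_iff zero_lt_two).2 ⟨s₁.2.1, h⟩⟩) := by
  show ((oneCellPath W a b).trans (η.map (inclOneCell W a b).continuous)) s₁ = _
  rw [Path.trans_apply, dif_pos h]; rfl

lemma ell_ge_half (s₁ : I) (h : ¬ ((s₁ : ℝ) ≤ 1/2)) :
    ℓp W a b η s₁ = Quot.mk _ (Sum.inl (η ⟨2*(s₁:ℝ)-1,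
      two_mul_sub_one_mem_iff.2 ⟨(not_le.1 h).le, s₁.2.2⟩⟩)) := by
  show ((oneCellPath W a b).trans (η.map (inclOneCell W a b).continuous)) s₁ = _
  rw [Path.trans_apply, dif_neg h]
  rfl

/-- as `ell_ge_half` but allowing the endpoint 1/2 -/
lemma ell_ge_half' (s₁ : I) (h : 1/2 ≤ (s₁ : ℝ)) (m' : I) (hm : (m' : ℝ) = 2*(s₁:ℝ)-1) :
    ℓp W a b η s₁ = Quot.mk _ (Sum.inl (η m')) := by
  by_cases h' : (s₁ : ℝ) ≤ 1/2
  · have hs : (s₁ : ℝ) = 1/2 := le_antisymm h' h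
    have hm0 : m' = 0 := Subtype.ext (by rw [hm, hs]; norm_num)
    rw [ell_le_half W a b η s₁ h']
    have key : ∀ (z : I), (z:ℝ) = 1 →
        (Quot.mk _ (Sum.inr z) : AttachOneCell W a b) = Quot.mk _ (Sum.inl (η m')) := by
      intro z hz
      rw [show z = 1 from Subtype.ext hz, hm0, η.source]
      exact Quot.sound (Or.inr ⟨rfl, rfl⟩)
    exact key _ (show 2*(s₁:ℝ) = 1 by rw [hs]; norm_num)
  · rw [ell_ge_half W a b η s₁ h']
    have key : ∀ (z : I), (z:ℝ) = (m':ℝ) →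
        (Quot.mk _ (Sum.inl (η z)) : AttachOneCell W a b) = Quot.mk _ (Sum.inl (η m')) := by
      intro z hz
      rw [show z = m' from Subtype.ext hz]
    exact key _ hm.symm

lemma mg_bottom (s' : ℝ) : mg s' ((0:I):ℝ) = |2*s'-1| := max_eq_left (abs_nonneg _)

/-- the retraction map `F` on the 1-cell part -/
noncomputable def FY : AttachOneCell W a b → W :=
  Quot.lift (Sum.elim id (fun u => η (unitInterval.symm u))) (by
    rintro z w (⟨rfl, rfl⟩ | ⟨rfl, rfl⟩)
    · show η (unitInterval.symm 0) = a
      rw [unitInterval.symm_zero, η.target]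
    · show η (unitInterval.symm 1) = b
      rw [unitInterval.symm_one, η.source])

/-- the retraction map `F` -/
noncomputable def Fmap : AttachTwoCell (AttachOneCell W a b) (x₀ W a b) (ℓp W a b η) → W :=
  Quot.lift (Sum.elim (FY W a b η) (fun p => η (mgI p))) (by
    rintro z w ⟨p, rfl, (⟨h0, rfl⟩ | ⟨hE, rfl⟩)⟩
    · show η (mgI p) = FY W a b η (ℓp W a b η p.1)
      have hp2 : (p.2 : ℝ) = 0 := by rw [h0]; rfl
      by_cases hs : (p.1 : ℝ) ≤ 1/2
      · rw [ell_le_half W a b η p.1 hs]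
        show η (mgI p) = η (unitInterval.symm ⟨2*(p.1:ℝ), _⟩)
        apply congrArg η
        apply Subtype.ext
        show mg p.1 p.2 = 1 - 2*(p.1:ℝ)
        rw [hp2]
        rw [show mg (p.1:ℝ) 0 = |2*(p.1:ℝ)-1| from max_eq_left (abs_nonneg _),
          abs_of_nonpos (by linarith)]
        ring
      · rw [ell_ge_half W a b η p.1 hs]
        show η (mgI p) = η ⟨2*(p.1:ℝ)-1, _⟩
        apply congrArg η
        apply Subtype.ext
        show mg p.1 p.2 = 2*(p.1:ℝ)-1
        rw [hp2]
        rw [show mg (p.1:ℝ) 0 = |2*(p.1:ℝ)-1| from max_eq_left (abs_nonneg _),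
          abs_of_nonneg (by push_neg at hs; linarith)]
    · show η (mgI p) = FY W a b η (x₀ W a b)
      have : mgI p = 1 := Subtype.ext (mg_eq_one hE)
      rw [this, η.target]
      rfl)

lemma continuous_mgI : Continuous (mgI) := by
  apply Continuous.subtype_mk
  unfold mg
  have c1 : Continuous fun p : I × I => (p.1 : ℝ) := continuous_subtype_val.comp continuous_fst
  have c2 : Continuous fun p : I × I => (p.2 : ℝ) := continuous_subtype_val.comp continuous_snd
  exact (((continuous_const.mul c1).sub continuous_const).abs).max c2

noncomputable def Fc : C(AttachTwoCell (AttachOneCell W a b) (x₀ W a b) (ℓp W a b η), W) :=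
  ⟨Fmap W a b η, by
    apply continuous_quot_lift
    apply Continuous.sumElim
    · apply continuous_quot_lift
      exact Continuous.sumElim continuous_id
        (η.continuous.comp unitInterval.continuous_symm)
    · exact η.continuous.comp (continuous_mgI)⟩

/-- the square homotopy mapped into the big space -/
noncomputable def Ksq : C((I × I) × I, AttachTwoCell (AttachOneCell W a b) (x₀ W a b) (ℓp W a b η)) :=
  ⟨fun z => φm W a b η (Kmap z.2 z.1), by
    apply Continuous.comp (continuous_quot_mk.comp continuous_inr)
    have ct : Continuous fun z : (I × I) × I => (z.2 : ℝ) := continuous_subtype_val.comp continuous_snd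
    have cs : Continuous fun z : (I × I) × I => (z.1.1 : ℝ) :=
      continuous_subtype_val.comp (continuous_fst.comp continuous_fst)
    have cu : Continuous fun z : (I × I) × I => (z.1.2 : ℝ) :=
      continuous_subtype_val.comp (continuous_snd.comp continuous_fst)
    have cm : Continuous fun z : (I × I) × I => mg z.1.1 z.1.2 := by
      unfold mg
      exact (((continuous_const.mul cs).sub continuous_const).abs).max cu
    have cG : Continuous fun z : (I × I) × I => Gg z.1.1 z.1.2 := by
      unfold Gg
      exact (((continuous_const.mul cs).sub continuous_const).add cu).min
        ((((continuous_const.mul cs).sub continuous_const).sub cu).max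
          ((continuous_const.mul cs).sub continuous_const))
    have cB : Continuous fun z : (I × I) × I => Bg z.2 z.1.1 z.1.2 := by
      unfold Bg
      exact ((continuous_const.sub ct).mul cG).add (ct.mul (continuous_const.mul cm))
    have cKx : Continuous fun z : (I × I) × I => Kxg z.2 z.1.1 z.1.2 := by
      unfold Kxg
      exact cm.neg.max (cm.min cB)
    apply Continuous.prodMk
    · apply Continuous.subtype_mk
      unfold Ksg
      exact (cKx.add continuous_const).div_const 2
    · apply Continuous.subtype_mk
      unfold Kyg
      exact cm.min ((continuous_const.mul cm).sub cB.abs)⟩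

noncomputable def Hsq : C(I × I, C(I, AttachTwoCell (AttachOneCell W a b) (x₀ W a b) (ℓp W a b η))) :=
  ContinuousMap.curry (Ksq W a b η)

/-- half of a unit interval element -/
noncomputable def halfI (u : I) : I := ⟨(u:ℝ)/2, by
  constructor
  · linarith [u.2.1]
  · linarith [u.2.2]⟩

/-- the homotopy, on the 1-handle part -/
noncomputable def HYf : AttachOneCell W a b → C(I, AttachTwoCell (AttachOneCell W a b) (x₀ W a b) (ℓp W a b η)) :=
  Quot.lift (Sum.elim (fun w => ContinuousMap.const I (Gmap W a b η w))
    (fun u => Hsq W a b η (halfI u, 0))) (by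
    rintro z w (⟨rfl, rfl⟩ | ⟨rfl, rfl⟩)
    · show Hsq W a b η (halfI 0, 0) = ContinuousMap.const I (Gmap W a b η a)
      ext t
      show φm W a b η (Kmap t (halfI 0, 0)) = Gmap W a b η a
      have hE : Eedge (halfI 0, 0) := Or.inr (Or.inl (Subtype.ext (by
        show ((0:I):ℝ)/2 = ((0:I):ℝ); norm_num)))
      rw [phi_E W a b η (Kmap_E t hE)]
      rfl
    · show Hsq W a b η (halfI 1, 0) = ContinuousMap.const I (Gmap W a b η b)
      ext t
      show φm W a b η (Kmap t (halfI 1, 0)) = Gmap W a b η b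
      have h12 : (halfI 1 : ℝ) = 1/2 := by show ((1:I):ℝ)/2 = 1/2; norm_num
      rw [Kmap_br t (halfI 1) (le_of_eq h12.symm), phi_bottom,
        ell_ge_half' W a b η (halfI 1) (le_of_eq h12.symm) 0 (by rw [h12]; norm_num),
        η.source]
      rfl)

/-- the homotopy, as a map into the path space -/
noncomputable def Hf : AttachTwoCell (AttachOneCell W a b) (x₀ W a b) (ℓp W a b η) →
    C(I, AttachTwoCell (AttachOneCell W a b) (x₀ W a b) (ℓp W a b η)) :=
  Quot.lift (Sum.elim (HYf W a b η) (fun p => Hsq W a b η p)) (by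
    rintro z w ⟨p, rfl, (⟨h0, rfl⟩ | ⟨hE, rfl⟩)⟩
    · show Hsq W a b η p = HYf W a b η (ℓp W a b η p.1)
      by_cases hs : (p.1 : ℝ) ≤ 1/2
      · rw [ell_le_half W a b η p.1 hs]
        show Hsq W a b η p = Hsq W a b η (halfI ⟨2*(p.1:ℝ), _⟩, 0)
        have : (halfI ⟨2*(p.1:ℝ), (mul_pos_mem_iff zero_lt_two).2 ⟨p.1.2.1, hs⟩⟩, (0:I)) = p := by
          refine Prod.ext (Subtype.ext ?_) h0.symm
          show 2*(p.1:ℝ)/2 = (p.1:ℝ)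
          ring
        rw [this]
      · rw [ell_ge_half W a b η p.1 hs]
        show Hsq W a b η p = ContinuousMap.const I (Gmap W a b η (η ⟨2*(p.1:ℝ)-1, _⟩))
        ext t
        show φm W a b η (Kmap t p) = _
        rw [Kmap_br' t p h0 (le_of_lt (not_le.1 hs))]
        have hp : p = (p.1, 0) := Prod.ext rfl h0
        conv_lhs => rw [hp]
        rw [phi_bottom, ell_ge_half W a b η p.1 hs]
        rfl
    · show Hsq W a b η p = HYf W a b η (x₀ W a b)
      ext t
      show φm W a b η (Kmap t p) = Gmap W a b η a
      rw [phi_E W a b η (Kmap_E t hE)]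
      rfl)

noncomputable def HfC : C(AttachTwoCell (AttachOneCell W a b) (x₀ W a b) (ℓp W a b η),
    C(I, AttachTwoCell (AttachOneCell W a b) (x₀ W a b) (ℓp W a b η))) :=
  ⟨Hf W a b η, by
    apply continuous_quot_lift
    apply Continuous.sumElim
    · apply continuous_quot_lift
      apply Continuous.sumElim
      · exact ContinuousMap.continuous_const'.comp (Gmap W a b η).continuous
      · apply (Hsq W a b η).continuous.comp
        exact Continuous.prodMk
          (Continuous.subtype_mk (continuous_subtype_val.div_const 2) _) continuous_const
    · exact (Hsq W a b η).continuous⟩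

noncomputable def Hbig : C(I × AttachTwoCell (AttachOneCell W a b) (x₀ W a b) (ℓp W a b η),
    AttachTwoCell (AttachOneCell W a b) (x₀ W a b) (ℓp W a b η)) :=
  (ContinuousMap.uncurry (HfC W a b η)).comp ⟨Prod.swap, continuous_swap⟩

lemma cell_congr (z₁ z₂ : I) (h : (z₁:ℝ) = (z₂:ℝ)) :
    q2 W a b η (Sum.inl (Quot.mk _ (Sum.inr z₁))) =
      q2 W a b η (Sum.inl (Quot.mk _ (Sum.inr z₂))) := by
  rw [Subtype.ext h]

lemma phi_to_G (m' : I) :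
    φm W a b η (⟨((m':ℝ)+1)/2, by constructor <;> [linarith [m'.2.1]; linarith [m'.2.2]]⟩, 0) =
      Gmap W a b η (η m') := by
  rw [phi_bottom, ell_ge_half' W a b η _ (by dsimp only; linarith [m'.2.1]) m' (by dsimp only; ring)]
  rfl

noncomputable def bigHomotopy : ContinuousMap.Homotopy
    (ContinuousMap.id (AttachTwoCell (AttachOneCell W a b) (x₀ W a b) (ℓp W a b η)))
    ((Gmap W a b η).comp (Fc W a b η)) where
  toContinuousMap := Hbig W a b η
  map_zero_left := by
    apply Quot.ind
    rintro (y | p)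
    · revert y
      apply Quot.ind
      rintro (w | u)
      · rfl
      · show φm W a b η (Kmap 0 (halfI u, 0)) = Quot.mk _ (Sum.inl (Quot.mk _ (Sum.inr u)))
        rw [Kmap_zero, phi_bottom, ell_le_half W a b η (halfI u) (by
          show (u:ℝ)/2 ≤ 1/2; linarith [u.2.2])]
        exact cell_congr W a b η _ u (show 2*((u:ℝ)/2) = (u:ℝ) by ring)
    · show φm W a b η (Kmap 0 p) = Quot.mk _ (Sum.inr p)
      rw [Kmap_zero]
      rfl
  map_one_left := by
    apply Quot.ind
    rintro (y | p)
    · revert y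
      apply Quot.ind
      rintro (w | u)
      · rfl
      · show φm W a b η (Kmap 1 (halfI u, 0)) = Gmap W a b η (η (unitInterval.symm u))
        rw [Kmap_one]
        have hm : mgI (halfI u, (0:I)) = unitInterval.symm u := Subtype.ext (by
          show mg ((u:ℝ)/2) ((0:I):ℝ) = 1 - (u:ℝ)
          rw [show ((0:I):ℝ) = 0 from rfl, show mg ((u:ℝ)/2) 0 = |2*((u:ℝ)/2)-1| from
            max_eq_left (abs_nonneg _), abs_of_nonpos (by linarith [u.2.2])]
          ring)
        calc φm W a b η (⟨(mg (halfI u) ((0:I)) + 1)/2, _⟩, 0)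
            = φm W a b η (⟨((mgI (halfI u, (0:I)) : ℝ)+1)/2, _⟩, 0) := rfl
          _ = Gmap W a b η (η (mgI (halfI u, (0:I)))) := phi_to_G W a b η _
          _ = Gmap W a b η (η (unitInterval.symm u)) := by rw [hm]
    · show φm W a b η (Kmap 1 p) = Gmap W a b η (η (mgI p))
      rw [Kmap_one]
      exact phi_to_G W a b η (mgI p)

noncomputable def theEquiv : ContinuousMap.HomotopyEquiv
    (AttachTwoCell (AttachOneCell W a b) (x₀ W a b) (ℓp W a b η)) W where
  toFun := Fc W a b η
  invFun := Gmap W a b η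
  left_inv := ⟨(bigHomotopy W a b η).symm⟩
  right_inv := by
    rw [show (Fc W a b η).comp (Gmap W a b η) = ContinuousMap.id W from
      ContinuousMap.ext fun w => rfl]

end HandleAux

/-- Handle cancellation, homotopy-theoretic version: attaching to `W` a 1-cell
with endpoints `a, b` and then a 2-cell along a loop that runs geometrically
once over the 1-cell (namely the core path of the 1-cell followed by the image
of a path `η` from `b` back to `a` inside `W`) yields a space homotopy
equivalent to `W` itself. -/
theorem handle_cancellation (W : Type) [TopologicalSpace W] (a b : W)
    (η : Path b a) :
    Nonempty
      (ContinuousMap.HomotopyEquiv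
        (AttachTwoCell (AttachOneCell W a b) (inclOneCell W a b a)
          ((oneCellPath W a b).trans (η.map (inclOneCell W a b).continuous)))
        W) := by
  exact ⟨HandleAux.theEquiv W a b η⟩
end
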